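/- Let z, w, f, g ∈ ℝ^m with f, g ≥ 0 entrywise, and X, Z ∈ ℝ^{m×m} with zero diagonals and nonpositive off-diagonal entries. Suppose the diagonal part of w(z-w)ᵀ equals the diagonal part of 𝟙fᵀ + g𝟙ᵀ, the off-diagonal part of w(z-w)ᵀ equals the off-diagonal part of X - Z, and the off-diagonal part of X + Z equals minus the off-diagonal part of 𝟙fᵀ + g𝟙ᵀ. Then for any i ≠ j with z_i = -z_j, it holds that w_i = -w_j. -/
import Mathlib


open Matrix

/-- Diagonal-part projection: keep diagonal entries, zero elsewhere. -/
def Pd {m : ℕ} (M : Matrix (Fin m) (Fin m) ℝ) : Matrix (Fin m) (Fin m) ℝ :=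
  Matrix.of fun i j => if i = j then M i j else 0

/-- Off-diagonal-part projection. -/
def Pod {m : ℕ} (M : Matrix (Fin m) (Fin m) ℝ) : Matrix (Fin m) (Fin m) ℝ :=
  M - Pd M

/-- Opposite `z`-components force opposite `w`-components under the dual
decomposition for odd nonlinearities. -/
theorem stmt_15 {m : ℕ} (z w f g : Fin m → ℝ)
    (hf : ∀ i, 0 ≤ f i) (hg : ∀ i, 0 ≤ g i)
    (X Z : Matrix (Fin m) (Fin m) ℝ)
    (hXd : ∀ i, X i i = 0) (hXod : ∀ i j, i ≠ j → X i j ≤ 0)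
    (hZd : ∀ i, Z i i = 0) (hZod : ∀ i j, i ≠ j → Z i j ≤ 0)
    (h1 : Pd (vecMulVec w (z - w)) =
      Pd (vecMulVec (fun _ => (1 : ℝ)) f + vecMulVec g (fun _ => (1 : ℝ))))
    (h2 : Pod (vecMulVec w (z - w)) = Pod (X - Z))
    (h3 : Pod (X + Z) =
      -Pod (vecMulVec (fun _ => (1 : ℝ)) f + vecMulVec g (fun _ => (1 : ℝ))))
    (i j : Fin m) (hij : i ≠ j) (hz : z i = -z j) :
    w i = -w j := by
  have key : ∀ (M N : Matrix (Fin m) (Fin m) ℝ), M = N → ∀ a b, M a b = N a b := by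
    intro M N h a b; rw [h]
  have e1 := key _ _ h1 i i
  have e2 := key _ _ h1 j j
  have e3 := key _ _ h2 i j
  have e4 := key _ _ h2 j i
  have e5 := key _ _ h3 i j
  have e6 := key _ _ h3 j i
  simp only [Pd, Pod, vecMulVec, Matrix.of_apply, Matrix.sub_apply, Matrix.add_apply,
    Matrix.neg_apply, Pi.sub_apply, if_pos rfl, if_neg hij, if_neg hij.symm,
    hXd, hZd, if_true] at e1 e2 e3 e4 e5 e6
  have hzi := hZod i j hij
  have hzj := hZod j i hij.symm
  rw [hz] at e1 e4
  have h0 : (w i + w j) ^ 2 = 0 := by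
    nlinarith [sq_nonneg (w i + w j), hf i, hf j, hg i, hg j]
  have := pow_eq_zero_iff (n := 2) (by norm_num) |>.mp h0
  linarith
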